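/- Let γ ∈ [0, π] and α, φ ∈ ℝ. Then (1/(2π)) · ∫_0^{2π} Π_γ(s + φ) · cos(α − s) ds = (2/π) · sin(γ) · cos(α + φ), where Π_γ is the 2π-periodic rectangular wave. -/
import Mathlib

open Classical in
/-- The 2π-periodic rectangular wave: `Π_γ t = 1` if `t` lies in `(-γ, γ)`
modulo `2π`, and `−1` otherwise. -/
noncomputable def rectWave (γ t : ℝ) : ℝ :=
  if ∃ k : ℤ, -γ < t - 2 * Real.pi * k ∧ t - 2 * Real.pi * k < γ then 1 else -1

open MeasureTheory intervalIntegral Real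

lemma rectWave_measurable (γ : ℝ) : Measurable (rectWave γ) := by
  classical
  unfold rectWave
  refine Measurable.ite ?_ measurable_const measurable_const
  have h : {t : ℝ | ∃ k : ℤ, -γ < t - 2 * Real.pi * k ∧ t - 2 * Real.pi * k < γ}
      = ⋃ k : ℤ, (fun t => t - 2 * Real.pi * k) ⁻¹' Set.Ioo (-γ) γ := by
    ext t
    simp only [Set.mem_setOf_eq, Set.mem_iUnion, Set.mem_preimage, Set.mem_Ioo]
  rw [h]
  exact MeasurableSet.iUnion fun k =>
    (measurable_id.sub_const _) measurableSet_Ioo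

lemma rectWave_periodic (γ : ℝ) : Function.Periodic (rectWave γ) (2 * Real.pi) := by
  intro t
  unfold rectWave
  congr 1
  apply propext
  constructor
  · rintro ⟨k, h1, h2⟩
    exact ⟨k - 1, by push_cast; constructor <;> nlinarith⟩
  · rintro ⟨k, h1, h2⟩
    exact ⟨k + 1, by push_cast; constructor <;> nlinarith⟩

lemma rectWave_intervalIntegrable (γ a b : ℝ) :
    IntervalIntegrable (rectWave γ) volume a b := by
  rw [intervalIntegrable_iff]
  apply Measure.integrableOn_of_bounded (M := 1)
  · exact (measure_Ioc_lt_top).ne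
  · exact (rectWave_measurable γ).aestronglyMeasurable
  · filter_upwards with t
    unfold rectWave
    split <;> simp

theorem rectWave_overlap_cos
    (γ α φ : ℝ) (hγ0 : 0 ≤ γ) (hγπ : γ ≤ Real.pi) :
    (1 / (2 * Real.pi)) * ∫ s in (0 : ℝ)..(2 * Real.pi),
        rectWave γ (s + φ) * Real.cos (α - s)
      = (2 / Real.pi) * Real.sin γ * Real.cos (α + φ) := by
  have hπ := Real.pi_pos
  set β := α + φ with hβ
  set f : ℝ → ℝ := fun u => rectWave γ u * Real.cos (β - u) with hf
  -- Step A: change of variables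
  have hA : (∫ s in (0 : ℝ)..(2 * Real.pi), rectWave γ (s + φ) * Real.cos (α - s))
      = ∫ u in φ..(φ + 2 * Real.pi), f u := by
    have h1 : (∫ s in (0 : ℝ)..(2 * Real.pi), rectWave γ (s + φ) * Real.cos (α - s))
        = ∫ s in (0 : ℝ)..(2 * Real.pi), f (s + φ) := by
      refine integral_congr fun s _ => ?_
      simp only [hf]
      congr 1
      congr 1
      rw [hβ]; ring
    rw [h1, integral_comp_add_right f φ]
    norm_num [add_comm]
  -- f is periodic
  have hper : Function.Periodic f (2 * Real.pi) := by
    intro t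
    simp only [hf]
    rw [rectWave_periodic γ t]
    congr 1
    have : β - (t + 2 * Real.pi) = (β - t) - 2 * Real.pi := by ring
    rw [this, Real.cos_sub_two_pi]
  -- Step B: shift to [-π, π]
  have hB : (∫ u in φ..(φ + 2 * Real.pi), f u) = ∫ u in (-Real.pi)..Real.pi, f u := by
    have := hper.intervalIntegral_add_eq φ (-Real.pi)
    rw [this, show -Real.pi + 2 * Real.pi = Real.pi by ring]
  -- integrability of f on any interval
  have hint : ∀ a b : ℝ, IntervalIntegrable f volume a b := fun a b =>
    (rectWave_intervalIntegrable γ a b).mul_continuousOn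
      (Continuous.continuousOn (by continuity))
  -- antiderivative of cos (β - ·)
  have hcos : ∀ a b : ℝ, (∫ u in a..b, Real.cos (β - u))
      = Real.sin (β - a) - Real.sin (β - b) := by
    intro a b
    rw [integral_comp_sub_left (fun x => Real.cos x) β, integral_cos]
  -- the three pieces
  have hleft : (∫ u in (-Real.pi)..(-γ), f u)
      = -(Real.sin (β + Real.pi) - Real.sin (β + γ)) := by
    have hcongr : (∫ u in (-Real.pi)..(-γ), f u)
        = ∫ u in (-Real.pi)..(-γ), -Real.cos (β - u) := by
      refine integral_congr fun u hu => ?_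
      rw [Set.uIcc_of_le (by linarith)] at hu
      obtain ⟨hu1, hu2⟩ := hu
      simp only [hf, rectWave]
      rw [if_neg]
      · ring
      · rintro ⟨k, h1, h2⟩
        rcases lt_trichotomy k 0 with hk | hk | hk
        · have hk' : (k : ℝ) ≤ -1 := by exact_mod_cast (by omega : k ≤ -1)
          nlinarith
        · subst hk; norm_num at h1 h2; linarith
        · have hk' : (1 : ℝ) ≤ (k : ℝ) := by exact_mod_cast hk
          nlinarith
    rw [hcongr, intervalIntegral.integral_neg, hcos]
    ring_nf
  have hright : (∫ u in γ..Real.pi, f u)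
      = -(Real.sin (β - γ) - Real.sin (β - Real.pi)) := by
    have hcongr : (∫ u in γ..Real.pi, f u)
        = ∫ u in γ..Real.pi, -Real.cos (β - u) := by
      refine integral_congr fun u hu => ?_
      rw [Set.uIcc_of_le (by linarith)] at hu
      obtain ⟨hu1, hu2⟩ := hu
      simp only [hf, rectWave]
      rw [if_neg]
      · ring
      · rintro ⟨k, h1, h2⟩
        rcases lt_trichotomy k 0 with hk | hk | hk
        · have hk' : (k : ℝ) ≤ -1 := by exact_mod_cast (by omega : k ≤ -1)
          nlinarith
        · subst hk; norm_num at h1 h2; linarith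
        · have hk' : (1 : ℝ) ≤ (k : ℝ) := by exact_mod_cast hk
          nlinarith
    rw [hcongr, intervalIntegral.integral_neg, hcos]
  have hmid : (∫ u in (-γ)..γ, f u)
      = Real.sin (β + γ) - Real.sin (β - γ) := by
    have hcongr : (∫ u in (-γ)..γ, f u) = ∫ u in (-γ)..γ, Real.cos (β - u) := by
      apply intervalIntegral.integral_congr_ae
      have hae : ∀ᵐ u : ℝ, u ≠ γ := by
        refine ae_iff.mpr ?_
        have : {u : ℝ | ¬u ≠ γ} = {γ} := by ext u; simp
        rw [this]; exact measure_singleton γ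
      filter_upwards [hae] with u hu hmem
      rw [Set.uIoc_of_le (by linarith)] at hmem
      obtain ⟨h1, h2⟩ := hmem
      have h2' : u < γ := lt_of_le_of_ne h2 hu
      simp only [hf, rectWave]
      rw [if_pos ⟨0, by push_cast; constructor <;> linarith⟩]
      ring
    rw [hcongr, hcos]
    ring_nf
  -- assemble
  have hsplit : (∫ u in (-Real.pi)..Real.pi, f u)
      = (∫ u in (-Real.pi)..(-γ), f u) + (∫ u in (-γ)..γ, f u)
        + ∫ u in γ..Real.pi, f u := by
    rw [integral_add_adjacent_intervals (hint _ _) (hint _ _),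
        integral_add_adjacent_intervals (hint _ _) (hint _ _)]
  rw [hA, hB, hsplit, hleft, hmid, hright]
  have e1 : Real.sin (β + Real.pi) = -Real.sin β := by
    rw [Real.sin_add]; simp
  have e2 : Real.sin (β - Real.pi) = -Real.sin β := by
    rw [Real.sin_sub]; simp
  rw [e1, e2, Real.sin_add, Real.sin_sub]
  have hπne : Real.pi ≠ 0 := hπ.ne'
  field_simp
  rw [Real.sin_add]
  ring
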